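/- Let κ be an uncountable cardinal that is indecomposable, meaning κ cannot be written as μ₀ + μ₁ with both μ₀, μ₁ strictly smaller than κ. Then 2^{ℵ₀} ↛ (κ)^κ: there is a 2-colouring of the κ-sized subsets of ℝ with no homogeneous set of cardinality κ. Specifically, the colouring giving A colour 0 iff A contains its infimum or its supremum (as a subset of ℝ) has no homogeneous set in [ℝ]^κ. -/

import Mathlib

/-- A set of reals all of whose initial segments (cut below a member) are
countable is countable. -/
lemma countable_of_countable_initial {A : Set ℝ}
    (h : ∀ x ∈ A, (A ∩ Set.Iio x).Countable) : A.Countable := by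
  classical
  set T : Set ℝ := {x | x ∈ A ∧ ∀ y ∈ A, y ≤ x} with hT
  have hTsub : T.Subsingleton := fun x hx y hy => le_antisymm (hy.2 x hx.1) (hx.2 y hy.1)
  set S : ℚ → Set ℝ := fun q => {x | x ∈ A ∧ x < (q : ℝ) ∧ ∃ y ∈ A, (q : ℝ) < y} with hS
  have hScnt : ∀ q : ℚ, (S q).Countable := by
    intro q
    by_cases hq : ∃ y ∈ A, (q : ℝ) < y
    · obtain ⟨y, hyA, hqy⟩ := hq
      refine (h y hyA).mono ?_
      rintro x ⟨hxA, hxq, -⟩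
      exact ⟨hxA, lt_trans hxq hqy⟩
    · refine Set.Countable.mono ?_ Set.countable_empty
      rintro x ⟨-, -, hy⟩
      exact absurd hy hq
  have hcover : A ⊆ (⋃ q : ℚ, S q) ∪ T := by
    intro x hx
    by_cases hxT : ∀ y ∈ A, y ≤ x
    · exact Or.inr ⟨hx, hxT⟩
    · push_neg at hxT
      obtain ⟨y, hyA, hxy⟩ := hxT
      obtain ⟨q, hq1, hq2⟩ := exists_rat_btwn hxy
      exact Or.inl (Set.mem_iUnion.2 ⟨q, hx, hq1, y, hyA, hq2⟩)
  exact Set.Countable.mono hcover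
    ((Set.countable_iUnion hScnt).union hTsub.countable)

/-- Mirror version: countable final segments. -/
lemma countable_of_countable_final {A : Set ℝ}
    (h : ∀ x ∈ A, (A ∩ Set.Ioi x).Countable) : A.Countable := by
  classical
  set T : Set ℝ := {x | x ∈ A ∧ ∀ y ∈ A, x ≤ y} with hT
  have hTsub : T.Subsingleton := fun x hx y hy => le_antisymm (hx.2 y hy.1) (hy.2 x hx.1)
  set S : ℚ → Set ℝ := fun q => {x | x ∈ A ∧ (q : ℝ) < x ∧ ∃ y ∈ A, y < (q : ℝ)} with hS
  have hScnt : ∀ q : ℚ, (S q).Countable := by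
    intro q
    by_cases hq : ∃ y ∈ A, y < (q : ℝ)
    · obtain ⟨y, hyA, hqy⟩ := hq
      refine (h y hyA).mono ?_
      rintro x ⟨hxA, hxq, -⟩
      exact ⟨hxA, lt_trans hqy hxq⟩
    · refine Set.Countable.mono ?_ Set.countable_empty
      rintro x ⟨-, -, hy⟩
      exact absurd hy hq
  have hcover : A ⊆ (⋃ q : ℚ, S q) ∪ T := by
    intro x hx
    by_cases hxT : ∀ y ∈ A, x ≤ y
    · exact Or.inr ⟨hx, hxT⟩
    · push_neg at hxT
      obtain ⟨y, hyA, hxy⟩ := hxT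
      obtain ⟨q, hq1, hq2⟩ := exists_rat_btwn hxy
      exact Or.inl (Set.mem_iUnion.2 ⟨q, hx, hq2, y, hyA, hq1⟩)
  exact Set.Countable.mono hcover
    ((Set.countable_iUnion hScnt).union hTsub.countable)

/-- Removing a countable set from an uncountable set keeps the cardinality. -/
lemma mk_diff_countable {H C : Set ℝ} (hH : Cardinal.aleph0 < Cardinal.mk ↥H)
    (hC : C.Countable) : Cardinal.mk ↥(H \ C) = Cardinal.mk ↥H := by
  refine le_antisymm (Cardinal.mk_le_mk_of_subset Set.diff_subset) ?_
  by_contra hlt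
  push_neg at hlt
  have h1 : Cardinal.mk ↥H ≤ Cardinal.mk ↥((H \ C) ∪ C) :=
    Cardinal.mk_le_mk_of_subset (fun x hx => by
      by_cases hc : x ∈ C
      · exact Or.inr hc
      · exact Or.inl ⟨hx, hc⟩)
  have h2 : Cardinal.mk ↥((H \ C) ∪ C) ≤ Cardinal.mk ↥(H \ C) + Cardinal.mk ↥C :=
    Cardinal.mk_union_le _ _
  have h3 : Cardinal.mk ↥C ≤ Cardinal.aleph0 := hC.le_aleph0
  have h4 : Cardinal.mk ↥(H \ C) + Cardinal.mk ↥C < Cardinal.mk ↥H :=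
    Cardinal.add_lt_of_lt hH.le hlt (lt_of_le_of_lt h3 hH)
  exact absurd (h1.trans h2) (not_le.2 h4)

/-- If `κ` is an uncountable indecomposable cardinal (it is not a sum of two
strictly smaller cardinals), then `2^{ℵ₀} ↛ (κ)^κ`: the colouring giving a set
`A ⊆ ℝ` colour `0` iff `A` contains its infimum or its supremum has no
homogeneous set of cardinality `κ`. -/
theorem indecomposable_no_partition_relation
    (κ : Cardinal) (hκ : Cardinal.aleph0 < κ)
    (hind : ∀ μ₀ μ₁ : Cardinal, μ₀ < κ → μ₁ < κ → μ₀ + μ₁ ≠ κ) :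
    ∃ F : Set ℝ → Fin 2,
      (∀ A : Set ℝ, F A = 0 ↔ (sInf A ∈ A ∨ sSup A ∈ A)) ∧
      ∀ H : Set ℝ, Cardinal.mk ↥H = κ →
        ∃ s : Set ℝ, s ⊆ H ∧ Cardinal.mk ↥s = κ ∧ F s ≠ F H := by
  classical
  refine ⟨fun A => if sInf A ∈ A ∨ sSup A ∈ A then 0 else 1, ?_, ?_⟩
  · intro A
    beta_reduce
    split_ifs with h
    · simp [h]
    · simp [h]
  · intro H hH
    have hHκ : Cardinal.aleph0 < Cardinal.mk ↥H := hH ▸ hκ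
    by_cases h0 : sInf H ∈ H ∨ sSup H ∈ H
    · -- H has colour 0; find a subset of colour 1 by removing the
      -- "left-small" and "right-small" parts and the point 0.
      set L : Set ℝ := {x | x ∈ H ∧ (H ∩ Set.Iio x).Countable} with hLdef
      set R : Set ℝ := {x | x ∈ H ∧ (H ∩ Set.Ioi x).Countable} with hRdef
      have hL : L.Countable := by
        refine countable_of_countable_initial (fun x hx => hx.2.mono ?_)
        rintro y ⟨hyL, hy⟩
        exact ⟨hyL.1, hy⟩
      have hR : R.Countable := by
        refine countable_of_countable_final (fun x hx => hx.2.mono ?_)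
        rintro y ⟨hyR, hy⟩
        exact ⟨hyR.1, hy⟩
      set C : Set ℝ := L ∪ R ∪ {0} with hCdef
      have hC : C.Countable := (hL.union hR).union (Set.countable_singleton 0)
      refine ⟨H \ C, Set.diff_subset, by rw [mk_diff_countable hHκ hC, hH], ?_⟩
      have h0mem : (0 : ℝ) ∈ C := Or.inr rfl
      have hmin : sInf (H \ C) ∉ H \ C := by
        by_cases hb : BddBelow (H \ C)
        · intro hm
          have hLc : (H ∩ Set.Iio (sInf (H \ C))).Countable := by
            refine hC.mono ?_
            rintro y ⟨hyH, hy⟩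
            by_contra hyC
            exact absurd (csInf_le hb ⟨hyH, hyC⟩) (not_le.2 hy)
          exact hm.2 (Or.inl (Or.inl ⟨hm.1, hLc⟩))
        · rw [Real.sInf_of_not_bddBelow hb]
          exact fun h => h.2 h0mem
      have hmax : sSup (H \ C) ∉ H \ C := by
        by_cases hb : BddAbove (H \ C)
        · intro hm
          have hRc : (H ∩ Set.Ioi (sSup (H \ C))).Countable := by
            refine hC.mono ?_
            rintro y ⟨hyH, hy⟩
            by_contra hyC
            exact absurd (le_csSup hb ⟨hyH, hyC⟩) (not_le.2 hy)
          exact hm.2 (Or.inl (Or.inr ⟨hm.1, hRc⟩))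
        · rw [Real.sSup_of_not_bddAbove hb]
          exact fun h => h.2 h0mem
      beta_reduce
      rw [if_neg (by rintro (h | h) <;> [exact hmin h; exact hmax h]), if_pos h0]
      decide
    · -- H has colour 1; find a half of H (above or below a point of H)
      -- which has colour 0.
      have hne : H.Nonempty := by
        rw [← Set.nonempty_coe_sort, ← Cardinal.mk_ne_zero_iff, hH]
        exact ne_of_gt (lt_trans Cardinal.aleph0_pos hκ)
      obtain ⟨a, ha⟩ := hne
      have hsplit : Cardinal.mk ↥(H ∩ Set.Iic a) + Cardinal.mk ↥(H ∩ Set.Ioi a) = κ := by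
        rw [← Cardinal.mk_union_of_disjoint (by
          rw [Set.disjoint_left]
          rintro x ⟨-, hx1⟩ ⟨-, hx2⟩
          exact absurd (show x ≤ a from hx1) (not_le.2 (show a < x from hx2)))]
        have hU : (H ∩ Set.Iic a) ∪ (H ∩ Set.Ioi a) = H := by
          ext x
          constructor
          · rintro (⟨hx, -⟩ | ⟨hx, -⟩) <;> exact hx
          · intro hx
            rcases le_or_gt x a with h | h
            · exact Or.inl ⟨hx, h⟩
            · exact Or.inr ⟨hx, h⟩
        rw [hU, hH]
      by_cases h1 : Cardinal.mk ↥(H ∩ Set.Iic a) < κ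
      · by_cases h2 : Cardinal.mk ↥(H ∩ Set.Ioi a) < κ
        · exact absurd hsplit (hind _ _ h1 h2)
        · -- the upper half is big; take H ∩ Ici a, whose inf is a ∈ it
          refine ⟨H ∩ Set.Ici a, Set.inter_subset_left, ?_, ?_⟩
          · refine le_antisymm (hH ▸ Cardinal.mk_le_mk_of_subset Set.inter_subset_left) ?_
            refine le_trans (not_lt.1 h2) (Cardinal.mk_le_mk_of_subset ?_)
            rintro x ⟨hx1, hx2⟩
            exact ⟨hx1, show a ≤ x from le_of_lt (show a < x from hx2)⟩
          · have haS : a ∈ H ∩ Set.Ici a := ⟨ha, le_refl a⟩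
            have hinf : sInf (H ∩ Set.Ici a) = a :=
              le_antisymm (csInf_le ⟨a, fun x hx => hx.2⟩ haS)
                (le_csInf ⟨a, haS⟩ (fun x hx => hx.2))
            beta_reduce
            rw [if_pos (Or.inl (show sInf (H ∩ Set.Ici a) ∈ H ∩ Set.Ici a by rw [hinf]; exact haS)), if_neg h0]
            decide
      · -- the lower half is big; its sup is a ∈ it
        refine ⟨H ∩ Set.Iic a, Set.inter_subset_left, ?_, ?_⟩
        · exact le_antisymm (hH ▸ Cardinal.mk_le_mk_of_subset Set.inter_subset_left)
            (not_lt.1 h1)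
        · have haS : a ∈ H ∩ Set.Iic a := ⟨ha, le_refl a⟩
          have hsup : sSup (H ∩ Set.Iic a) = a :=
            le_antisymm (csSup_le ⟨a, haS⟩ (fun x hx => hx.2))
              (le_csSup ⟨a, fun x hx => hx.2⟩ haS)
          beta_reduce
          rw [if_pos (Or.inr (show sSup (H ∩ Set.Iic a) ∈ H ∩ Set.Iic a by rw [hsup]; exact haS)), if_neg h0]
          decide
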